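/- Let p be a prime with p ≡ 3 (mod 4). Then the quaternion algebra (−1, −p)_ℚ is a division ring, i.e., every nonzero element of (−1, −p)_ℚ is invertible. -/

import Mathlib

open scoped Quaternion

theorem quaternion_neg_one_neg_p_division (p : ℕ) (hp : p.Prime) (h4 : p % 4 = 3) :
    ∀ x : ℍ[ℚ, -1, -(p : ℚ)], x ≠ 0 → IsUnit x := by
  intro x hx
  set n : ℚ := (x * star x).re with hn
  have hnval : n = x.re ^ 2 + x.imI ^ 2 + (p : ℚ) * x.imJ ^ 2 + (p : ℚ) * x.imK ^ 2 := by
    simp [hn, QuaternionAlgebra.re_mul]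
    ring
  have hppos : (0 : ℚ) < (p : ℚ) := by exact_mod_cast hp.pos
  have hnne : n ≠ 0 := by
    intro h0
    apply hx
    have h1 : x.re ^ 2 + x.imI ^ 2 + (p : ℚ) * x.imJ ^ 2 + (p : ℚ) * x.imK ^ 2 = 0 := by
      rw [← hnval]; exact h0
    have hj2 : (p : ℚ) * x.imJ ^ 2 = 0 := by
      nlinarith [sq_nonneg x.re, sq_nonneg x.imI, mul_nonneg hppos.le (sq_nonneg x.imJ),
        mul_nonneg hppos.le (sq_nonneg x.imK)]
    have hk2 : (p : ℚ) * x.imK ^ 2 = 0 := by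
      nlinarith [sq_nonneg x.re, sq_nonneg x.imI, mul_nonneg hppos.le (sq_nonneg x.imJ),
        mul_nonneg hppos.le (sq_nonneg x.imK)]
    have hj : x.imJ = 0 := by
      have := (mul_eq_zero.mp hj2).resolve_left hppos.ne'
      exact pow_eq_zero_iff (by norm_num) |>.mp this
    have hk : x.imK = 0 := by
      have := (mul_eq_zero.mp hk2).resolve_left hppos.ne'
      exact pow_eq_zero_iff (by norm_num) |>.mp this
    have hre : x.re = 0 := by
      nlinarith [sq_nonneg x.re, sq_nonneg x.imI]
    have hi : x.imI = 0 := by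
      nlinarith [sq_nonneg x.re, sq_nonneg x.imI]
    ext <;> simp [hre, hi, hj, hk]
  have hstar : x * star x = (n : ℍ[ℚ, -1, -(p : ℚ)]) := QuaternionAlgebra.mul_star_eq_coe x
  have hstar' : star x * x = (n : ℍ[ℚ, -1, -(p : ℚ)]) := by
    rw [star_comm_self', hstar]
  have h1 : x * (n⁻¹ • star x) = 1 := by
    rw [mul_smul_comm, hstar, QuaternionAlgebra.smul_coe]
    simp [inv_mul_cancel₀ hnne]
  have h2 : (n⁻¹ • star x) * x = 1 := by
    rw [smul_mul_assoc, hstar', QuaternionAlgebra.smul_coe]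
    simp [inv_mul_cancel₀ hnne]
  exact ⟨⟨x, n⁻¹ • star x, h1, h2⟩, rfl⟩
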